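/- An infinite simple group is not presentable by a product. -/

import Mathlib

def PresentableByProduct (G : Type*) [Group G] : Prop :=
  ∃ G₁ G₂ : Subgroup G, (G₁ : Set G).Infinite ∧ (G₂ : Set G).Infinite ∧
    (∀ g₁ ∈ G₁, ∀ g₂ ∈ G₂, g₁ * g₂ = g₂ * g₁) ∧
    (Subgroup.closure ((G₁ : Set G) ∪ (G₂ : Set G))).FiniteIndex

theorem stmt_14 {Γ : Type*} [Group Γ] [Infinite Γ] (hs : IsSimpleGroup Γ) :
    ¬ PresentableByProduct Γ := by
  haveI := hs
  rintro ⟨G₁, G₂, h1, h2, hcomm, hfi⟩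
  -- finite index subgroups are the whole group
  have hcard : Nat.card Γ = 0 := Nat.card_eq_zero_of_infinite
  set H := Subgroup.closure ((G₁ : Set Γ) ∪ (G₂ : Set Γ)) with hH
  haveI := hfi
  have hcore : H.normalCore = ⊤ := by
    rcases hs.eq_bot_or_eq_top_of_normal H.normalCore inferInstance with h | h
    · exfalso
      haveI : H.normalCore.FiniteIndex := Subgroup.finiteIndex_normalCore H
      have : H.normalCore.index ≠ 0 := Subgroup.FiniteIndex.index_ne_zero
      rw [h, Subgroup.index_bot, hcard] at this
      exact this rfl
    · exact h
  have hHtop : H = ⊤ := top_le_iff.mp (hcore ▸ Subgroup.normalCore_le H)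
  -- G₁ is normal
  have hnorm : Subgroup.normalizer (G₁ : Set Γ) = ⊤ := by
    rw [← top_le_iff, ← hHtop, hH]
    apply Subgroup.closure_le _ |>.mpr
    rintro x (hx | hx) <;> simp only [SetLike.mem_coe]
    · exact Subgroup.le_normalizer hx
    · rw [Subgroup.mem_normalizer_iff]
      intro g
      constructor
      · intro hg
        have := hcomm g hg x hx
        have : x * g * x⁻¹ = g := by
          rw [← this]; group
        rw [this]; exact hg
      · intro hg
        have h' := hcomm _ hg x hx
        have h2' : x * g = x * (x * g * x⁻¹) := by
          calc x * g = x * g * x⁻¹ * x := by group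
            _ = x * (x * g * x⁻¹) := h'
        have h3 := mul_left_cancel h2'
        rw [h3]; exact hg
  have hG₁ : G₁ = ⊤ := by
    rcases hs.eq_bot_or_eq_top_of_normal G₁ (Subgroup.normalizer_eq_top_iff.mp hnorm) with h | h
    · exfalso; rw [h] at h1
      exact h1 (Set.finite_singleton 1 |>.subset (by simp))
    · exact h
  -- G₂ ≤ center
  have hG₂ : G₂ ≤ Subgroup.center Γ := by
    intro g hg
    rw [Subgroup.mem_center_iff]
    intro h
    exact hcomm h (by rw [hG₁]; trivial) g hg
  rcases hs.eq_bot_or_eq_top_of_normal (Subgroup.center Γ) inferInstance with h | h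
  · rw [h] at hG₂
    exact h2 ((Set.finite_singleton 1).subset (by
      intro x hx; simpa using hG₂ hx))
  · -- Γ is abelian, so every subgroup is normal
    have hab : ∀ a b : Γ, b * a = a * b := fun a b =>
      Subgroup.mem_center_iff.mp (h ▸ Subgroup.mem_top a) b
    have hnormal : ∀ K : Subgroup Γ, K.Normal := fun K =>
      ⟨fun n hn g => by
        have : g * n * g⁻¹ = n := by rw [hab n g]; group
        rw [this]; exact hn⟩
    obtain ⟨g, hg⟩ := exists_ne (1 : Γ)
    have hzt : Subgroup.zpowers g = ⊤ :=
      (hs.eq_bot_or_eq_top_of_normal _ (hnormal _)).resolve_left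
        (Subgroup.zpowers_ne_bot.2 hg)
    have hinf : ¬ IsOfFinOrder g := by
      rw [← infinite_zpowers, hzt]
      simpa using Set.infinite_univ
    rcases hs.eq_bot_or_eq_top_of_normal (Subgroup.zpowers (g * g)) (hnormal _) with h2' | h2'
    · -- then g * g = 1
      have hgg : g * g = 1 := by
        have := Subgroup.mem_zpowers (g * g)
        rw [h2', Subgroup.mem_bot] at this
        exact this
      exact hinf (isOfFinOrder_iff_pow_eq_one.mpr ⟨2, by norm_num, by rw [pow_two]; exact hgg⟩)
    · -- g ∈ zpowers (g*g), forcing finite order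
      have hmem : g ∈ Subgroup.zpowers (g * g) := h2' ▸ Subgroup.mem_top g
      obtain ⟨k, hk⟩ := Subgroup.mem_zpowers_iff.mp hmem
      have hk' : g ^ (2 * k - 1) = 1 := by
        have : (g * g) ^ k = g ^ (2 * k) := by
          rw [← pow_two, ← zpow_natCast, ← zpow_mul]
          norm_num
        rw [this] at hk
        rw [zpow_sub, hk, zpow_one, mul_inv_cancel]
      exact hinf (isOfFinOrder_iff_zpow_eq_one.mpr ⟨2 * k - 1, by omega, hk'⟩)
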